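/- Half the bits in a column cannot be tolerated: Let T be a half de Bruijn sequence of order k, S a de Bruijn sequence of order n ≥ 1, and G(i,j) = T(i) XOR S(j). There exist two distinct positions whose k × n windows W1, W2 in G differ in exactly one column (in all k entries of that column). Consequently, if an adversary may flip at least ⌈k/2⌉ bits within a single column of the sensed window, no decoder can always correctly determine the sensor position. -/

import Mathlib

/-- Window of length `m` starting at position `i` in a cyclic binary sequence of length `L`. -/
def cycWindow (L m : ℕ) (S : ℕ → Bool) (i : ℕ) : Fin m → Bool :=
  fun a => S ((i + (a : ℕ)) % L)

/-- A binary de Bruijn sequence of order `n`: a cyclic sequence of length `2^n` in which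
every binary `n`-tuple appears exactly once as a cyclic window. -/
def IsDeBruijn (n : ℕ) (S : ℕ → Bool) : Prop :=
  ∀ X : Fin n → Bool, ∃! i : Fin (2 ^ n), cycWindow (2 ^ n) n S (i : ℕ) = X

/-- A half de Bruijn sequence of order `n`: a cyclic binary sequence of length `2^(n-1)` in
which, for every binary `n`-tuple `X`, exactly one of `X` and its bitwise complement appears,
and it appears exactly once, as a cyclic window. -/
def IsHalfDeBruijn (n : ℕ) (T : ℕ → Bool) : Prop :=
  ∀ X : Fin n → Bool, ∃! i : Fin (2 ^ (n - 1)),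
    cycWindow (2 ^ (n - 1)) n T (i : ℕ) = X ∨
    cycWindow (2 ^ (n - 1)) n T (i : ℕ) = fun a => !(X a)

/-- An M-sequence of order `m`: a cyclic binary sequence of length `2^m - 1` in which every
nonzero binary `m`-tuple appears exactly once as a cyclic window. -/
def IsMSequence (m : ℕ) (S : ℕ → Bool) : Prop :=
  ∀ X : Fin m → Bool, X ≠ (fun _ => false) →
    ∃! i : Fin (2 ^ m - 1), cycWindow (2 ^ m - 1) m S (i : ℕ) = X

/-- Half the bits in a column cannot be tolerated: there are two distinct positions whose
`k x n` windows in the product array differ in exactly one full column, and consequently no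
decoder can always determine the position correctly if an adversary may flip at least
`ceil(k/2)` bits within a single column of the sensed window. -/
theorem half_column_errors_fatal (k n K N : ℕ) (hk : 0 < k) (hn : 0 < n)
    (hK : K = 2 ^ (k - 1)) (hN : N = 2 ^ n)
    (T S : ℕ → Bool) (hT : IsHalfDeBruijn k T) (hS : IsDeBruijn n S)
    (W : Fin K × Fin N → Fin k → Fin n → Bool)
    (hW : ∀ p a b, W p a b =
      xor (T (((p.1 : ℕ) + (a : ℕ)) % K)) (S (((p.2 : ℕ) + (b : ℕ)) % N))) :
    (∃ p q : Fin K × Fin N, p ≠ q ∧ ∃ c : Fin n,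
      (∀ a : Fin k, W p a c ≠ W q a c) ∧ ∀ a : Fin k, ∀ b : Fin n, b ≠ c → W p a b = W q a b) ∧
    (∀ dec : (Fin k → Fin n → Bool) → Fin K × Fin N,
      ∃ (p : Fin K × Fin N) (E : Fin k → Fin n → Bool) (c : Fin n),
        (∀ a b, E a b = true → b = c) ∧
        (Finset.univ.filter (fun a => E a c = true)).card ≤ (k + 1) / 2 ∧
        dec (fun a b => xor (W p a b) (E a b)) ≠ p) := by

  subst hK hN
  -- choose column `c` and two positions of `S` whose windows differ exactly at `c`
  set c : Fin n := ⟨0, hn⟩ with hcdef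
  obtain ⟨i, hi, -⟩ := hS (fun _ => false)
  obtain ⟨j, hj, -⟩ := hS (fun b => decide (b = c))
  have hij : i ≠ j := by
    intro h
    have h2 : (fun _ : Fin n => false) = (fun b : Fin n => decide (b = c)) := by
      rw [← hi, ← hj, h]
    have := congrFun h2 c
    simp at this
  have hK0 : 0 < 2 ^ (k - 1) := pow_pos (by norm_num) _
  set p : Fin (2 ^ (k - 1)) × Fin (2 ^ n) := (⟨0, hK0⟩, i) with hp
  set q : Fin (2 ^ (k - 1)) × Fin (2 ^ n) := (⟨0, hK0⟩, j) with hq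
  have hpq : p ≠ q := by
    exact fun h => hij (congrArg Prod.snd h)
  have hSi : ∀ b : Fin n, S (((i : ℕ) + (b : ℕ)) % 2 ^ n) = false := fun b => congrFun hi b
  have hSj : ∀ b : Fin n, S (((j : ℕ) + (b : ℕ)) % 2 ^ n) = decide (b = c) :=
    fun b => congrFun hj b
  have hSic : S ((i : ℕ) % 2 ^ n) = false := by
    have := hSi c; simpa [hcdef] using this
  have hSjc : S ((j : ℕ) % 2 ^ n) = true := by
    have := hSj c; simpa [hcdef] using this
  have h1 : ∀ a, W q a c = !(W p a c) := by
    intro a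
    rw [hW, hW]
    simp [hp, hq, hcdef, hSic, hSjc]
  have h2 : ∀ a b, b ≠ c → W p a b = W q a b := by
    intro a b hb
    rw [hW, hW]
    simp [hp, hq, hSi b, hSj b, hb]
  constructor
  · exact ⟨p, q, hpq, c, fun a => by simp [h1 a], h2⟩
  · intro dec
    set m := (k + 1) / 2 with hm
    set E1 : Fin k → Fin n → Bool := fun a b => decide (b = c) && decide ((a : ℕ) < m) with hE1
    set E2 : Fin k → Fin n → Bool := fun a b => decide (b = c) && decide (m ≤ (a : ℕ)) with hE2
    have hV : (fun a b => xor (W p a b) (E1 a b)) = (fun a b => xor (W q a b) (E2 a b)) := by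
      funext a b
      by_cases hb : b = c
      · subst hb
        by_cases ha : (a : ℕ) < m
        · simp [hE1, hE2, ha, Nat.not_le.mpr ha, h1 a]
        · simp [hE1, hE2, ha, Nat.not_lt.mp ha, h1 a]
      · simp [hE1, hE2, hb, h2 a b hb]
    have hcard1 : (Finset.univ.filter (fun a : Fin k => E1 a c = true)).card ≤ m := by
      have he : (Finset.univ.filter (fun a : Fin k => E1 a c = true))
          = Finset.univ.filter (fun a : Fin k => (a : ℕ) < m) := by
        simp [hE1]
      rw [he]
      have := Finset.card_le_card_of_injOn (fun a : Fin k => (a : ℕ))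
        (s := Finset.univ.filter (fun a : Fin k => (a : ℕ) < m)) (t := Finset.range m)
        (by intro a ha; simp at ha ⊢; exact ha)
        (by intro x _ y _ h; exact Fin.ext h)
      simpa using this
    have hcard2 : (Finset.univ.filter (fun a : Fin k => E2 a c = true)).card ≤ m := by
      have he : (Finset.univ.filter (fun a : Fin k => E2 a c = true))
          = Finset.univ.filter (fun a : Fin k => m ≤ (a : ℕ)) := by
        simp [hE2]
      rw [he]
      have hle := Finset.card_le_card_of_injOn (fun a : Fin k => (a : ℕ) - m)
        (s := Finset.univ.filter (fun a : Fin k => m ≤ (a : ℕ))) (t := Finset.range (k - m))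
        (by intro a ha; simp at ha ⊢; omega)
        (by intro x hx y hy h; simp at hx hy h; exact Fin.ext (by omega))
      simp at hle
      omega
    by_cases hdec : dec (fun a b => xor (W p a b) (E1 a b)) = p
    · refine ⟨q, E2, c, ?_, hcard2, ?_⟩
      · intro a b hb
        simp [hE2] at hb
        exact hb.1
      · rw [← hV, hdec]
        exact hpq
    · exact ⟨p, E1, c, fun a b hb => by simp [hE1] at hb; exact hb.1, hcard1, hdec⟩
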